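/- Let p be a projection and e an effect, with cosine c, sine s, j := (p(e−e²)p + p⊥(e−e²)p⊥)^{1/2}, and commutator effect b := (c²s² − j²)^{1/2}. Then the following are mutually equivalent: (i) e is a projection (e² = e); (ii) j = 0; (iii) b = cs. -/

import Mathlib

open scoped NNReal

section aux

variable {A : Type*} [CStarAlgebra A] [PartialOrder A] [StarOrderedRing A]

/-- Uniqueness of nonnegative square roots. -/
lemma stmt9_sq_inj {x y : A} (hx : 0 ≤ x) (hy : 0 ≤ y) (h : x ^ 2 = y ^ 2) : x = y := by
  rw [← CFC.sqrt_sq x hx, h, CFC.sqrt_sq y hy]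

lemma stmt9_sq_eq_zero {x : A} (hx : 0 ≤ x) (h : x ^ 2 = 0) : x = 0 := by
  refine stmt9_sq_inj hx le_rfl ?_
  simpa using h

lemma stmt9_sq_nonneg {x : A} (hx : 0 ≤ x) : 0 ≤ x ^ 2 := by
  have h := star_mul_self_nonneg x
  rwa [(IsSelfAdjoint.of_nonneg hx).star_eq, ← pow_two] at h

/-- If `p x p = 0` with `x ≥ 0` and `p` selfadjoint, then `x p = 0`. -/
lemma stmt9_conj_zero {x p : A} (hx : 0 ≤ x) (hpsa : IsSelfAdjoint p)
    (h : p * x * p = 0) : x * p = 0 := by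
  set r := CFC.sqrt x with hr_def
  have hr : r * r = x := CFC.sqrt_mul_sqrt_self x hx
  have hrsa : IsSelfAdjoint r := .of_nonneg (CFC.sqrt_nonneg x)
  have key : star (r * p) * (r * p) = p * x * p := by
    rw [star_mul, hrsa.star_eq, hpsa.star_eq, ← hr]
    noncomm_ring
  have hz : r * p = 0 := by
    rw [← CStarRing.star_mul_self_eq_zero_iff, key, h]
  calc x * p = r * (r * p) := by rw [← mul_assoc, hr]
  _ = 0 := by rw [hz, mul_zero]

omit [PartialOrder A] [StarOrderedRing A] in
lemma stmt9_conj_aux (r x : A) (hr : r * r = x) :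
    r * (1 - x) * r = x - x ^ 2 := by
  rw [← hr]; noncomm_ring

end aux

/-- In a unital C*-algebra, with `p` a projection, `e` an effect,
`c` the cosine, `s` the sine, `j = (p(e−e²)p + p⊥(e−e²)p⊥)^{1/2}`, and the commutator
effect `b = (c²s² − j²)^{1/2}` (all square roots encoded by nonnegativity plus the
defining equation), the following are equivalent:
(i) `e` is a projection (`e² = e`); (ii) `j = 0`; (iii) `b = cs`. -/
theorem stmt9 {A : Type*} [CStarAlgebra A] [PartialOrder A] [StarOrderedRing A]
    (p e c s j b : A) (hp : IsSelfAdjoint p) (hp2 : p ^ 2 = p)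
    (he0 : 0 ≤ e) (he1 : e ≤ 1)
    (hc0 : 0 ≤ c) (hc2 : c ^ 2 = p * e * p + (1 - p) * (1 - e) * (1 - p))
    (hs0 : 0 ≤ s) (hs2 : s ^ 2 = p * (1 - e) * p + (1 - p) * e * (1 - p))
    (hj0 : 0 ≤ j)
    (hj2 : j ^ 2 = p * (e - e ^ 2) * p + (1 - p) * (e - e ^ 2) * (1 - p))
    (hb0 : 0 ≤ b) (hb2 : b ^ 2 = c ^ 2 * s ^ 2 - j ^ 2) :
    List.TFAE [e ^ 2 = e, j = 0, b = c * s] := by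
  have hpp : p * p = p := by rw [← pow_two, hp2]
  -- c² + s² = 1
  have hsum : c ^ 2 + s ^ 2 = 1 := by
    have expand : p * e * p + (1 - p) * (1 - e) * (1 - p)
        + (p * (1 - e) * p + (1 - p) * e * (1 - p))
        = p * p + (1 - p) * (1 - p) := by noncomm_ring
    have hq : (1 - p) * (1 - p) = 1 - p := by
      have h1 : (1 - p) * (1 - p) = 1 - p - p + p * p := by noncomm_ring
      rw [h1, hpp]; abel
    rw [hc2, hs2, expand, hpp, hq]; abel
  have hs2nn : (0 : A) ≤ s ^ 2 := stmt9_sq_nonneg hs0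
  have hc2nn : (0 : A) ≤ c ^ 2 := stmt9_sq_nonneg hc0
  have hs2' : s ^ 2 = 1 - c ^ 2 := eq_sub_of_add_eq' hsum
  have hc2le : c ^ 2 ≤ 1 := by
    rw [← hsum]; exact le_add_of_nonneg_right hs2nn
  have hspec : ∀ x ∈ spectrum ℝ≥0 (c ^ 2), x ≤ 1 := by
    intro x hx
    have hx' : (x : ℝ) ∈ spectrum ℝ (c ^ 2) := by
      simpa using spectrum.algebraMap_mem ℝ hx
    exact_mod_cast (CFC.le_one_iff (R := ℝ) (c ^ 2)
      (IsSelfAdjoint.of_nonneg hc2nn)).mp hc2le x hx'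
  -- 1 - c² as cfc
  have hkey : (1 : A) - c ^ 2 = cfc (fun x : ℝ≥0 => 1 - x) (c ^ 2) := by
    have h := cfc_tsub (fun _ : ℝ≥0 => 1) (fun x => x) (c ^ 2)
      (fun x hx => hspec x hx) hc2nn continuousOn_const (continuous_id.continuousOn)
    rw [cfc_const_one ℝ≥0 (c ^ 2) hc2nn, cfc_id' ℝ≥0 (c ^ 2) hc2nn] at h
    exact h.symm
  have hc_eq : c = cfc NNReal.sqrt (c ^ 2) := by
    rw [← CFC.sqrt_eq_cfc, CFC.sqrt_sq c hc0]
  have hs_eq : s = cfc (fun x : ℝ≥0 => NNReal.sqrt (1 - x)) (c ^ 2) := by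
    have h1 : s = CFC.sqrt ((1 : A) - c ^ 2) := by
      rw [← hs2', CFC.sqrt_sq s hs0]
    rw [h1, hkey, CFC.sqrt_eq_cfc,
      ← cfc_comp' NNReal.sqrt (fun x : ℝ≥0 => 1 - x) (c ^ 2) (by fun_prop) (by fun_prop) hc2nn]
  have hcomm : Commute c s := by
    rw [hc_eq, hs_eq]; exact cfc_commute_cfc _ _ _
  have hcs_nn : (0 : A) ≤ c * s := by
    rw [hc_eq, hs_eq, ← cfc_mul _ _ (c ^ 2) (by fun_prop) (by fun_prop)]
    exact cfc_predicate _ _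
  have hcs_sq : (c * s) ^ 2 = c ^ 2 * s ^ 2 := hcomm.mul_pow 2
  -- e - e² ≥ 0
  have hx : (0 : A) ≤ e - e ^ 2 := by
    have h1e : (0 : A) ≤ 1 - e := sub_nonneg.2 he1
    have h := star_left_conjugate_nonneg h1e (CFC.sqrt e)
    have hrsa : IsSelfAdjoint (CFC.sqrt e : A) := .of_nonneg (CFC.sqrt_nonneg e)
    rw [hrsa.star_eq] at h
    have hr : CFC.sqrt e * CFC.sqrt e = e := CFC.sqrt_mul_sqrt_self e he0
    have heq : CFC.sqrt e * (1 - e) * CFC.sqrt e = e - e ^ 2 :=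
      stmt9_conj_aux _ _ hr
    rwa [heq] at h
  tfae_have 1 → 2
  | h1 => by
    refine stmt9_sq_eq_zero hj0 ?_
    rw [hj2, h1]; simp
  tfae_have 2 → 1
  | h2 => by
    have hz : p * (e - e ^ 2) * p + (1 - p) * (e - e ^ 2) * (1 - p) = 0 := by
      rw [← hj2, h2]; simp
    have hqsa : IsSelfAdjoint (1 - p : A) := by
      rw [IsSelfAdjoint, star_sub, star_one, hp.star_eq]
    have h1 : (0 : A) ≤ p * (e - e ^ 2) * p := by
      have := star_left_conjugate_nonneg hx p
      rwa [hp.star_eq] at this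
    have h2' : (0 : A) ≤ (1 - p) * (e - e ^ 2) * (1 - p) := by
      have := star_left_conjugate_nonneg hx (1 - p)
      rwa [hqsa.star_eq] at this
    have hz1 : p * (e - e ^ 2) * p = 0 := by
      refine le_antisymm ?_ h1
      calc p * (e - e ^ 2) * p
          ≤ p * (e - e ^ 2) * p + (1 - p) * (e - e ^ 2) * (1 - p) :=
            le_add_of_nonneg_right h2'
        _ = 0 := hz
    have hz2 : (1 - p) * (e - e ^ 2) * (1 - p) = 0 := by
      refine le_antisymm ?_ h2'
      calc (1 - p) * (e - e ^ 2) * (1 - p)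
          ≤ p * (e - e ^ 2) * p + (1 - p) * (e - e ^ 2) * (1 - p) :=
            le_add_of_nonneg_left h1
        _ = 0 := hz
    have hxp : (e - e ^ 2) * p = 0 := stmt9_conj_zero hx hp hz1
    have hxq : (e - e ^ 2) * (1 - p) = 0 := stmt9_conj_zero hx hqsa hz2
    have : (e - e ^ 2) = 0 := by
      have := congrArg₂ (· + ·) hxp hxq
      simpa [← mul_add] using this
    rw [sub_eq_zero] at this
    exact this.symm
  tfae_have 2 → 3
  | h2 => by
    refine (stmt9_sq_inj hcs_nn hb0 ?_).symm
    rw [hcs_sq, hb2, h2]; simp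
  tfae_have 3 → 2
  | h3 => by
    refine stmt9_sq_eq_zero hj0 ?_
    have : (c * s) ^ 2 = c ^ 2 * s ^ 2 - j ^ 2 := by rw [← h3, hb2]
    rw [hcs_sq] at this
    exact sub_eq_self.mp this.symm
  tfae_finish
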